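/- Let U(x) = (1 + |x|²)^{−(n−4)/2} on ℝⁿ with n ≥ 5, and set u(x) = |x|^{−α/2} U(x) for α ∈ (4−n, n). Then ∫_{ℝⁿ} |x|^{α−2} |∇u|² dx = B_α ∫_{ℝⁿ} |x|^{−4} U² dx, where B_α = ((n−4+α)/2)² + (n−4)²/(4(n−3)). -/

import Mathlib

open Real MeasureTheory Set Filter Topology

lemma aux_cont (p q : ℕ) : Continuous (fun r : ℝ => r ^ p / (1 + r ^ 2) ^ q) := by
  apply Continuous.div (by continuity) (by continuity)
  intro r; positivity

lemma aux_le (p q : ℕ) {r : ℝ} (hr : 1 ≤ r) :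
    r ^ p / (1 + r ^ 2) ^ q ≤ r ^ ((p : ℝ) - 2 * q) := by
  have hr0 : (0 : ℝ) < r := lt_of_lt_of_le one_pos hr
  have h1 : r ^ ((p : ℝ) - 2 * q) = r ^ p / r ^ (2 * q) := by
    rw [Real.rpow_sub hr0]; norm_cast
  rw [h1]
  have h2 : r ^ (2 * q) ≤ (1 + r ^ 2) ^ q := by
    calc r ^ (2 * q) = (r ^ 2) ^ q := by rw [pow_mul]
      _ ≤ (1 + r ^ 2) ^ q := by gcongr; linarith
  exact div_le_div_of_nonneg_left (by positivity) (by positivity) h2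

lemma aux_integrable (p q : ℕ) (hpq : p + 2 ≤ 2 * q) :
    IntegrableOn (fun r : ℝ => r ^ p / (1 + r ^ 2) ^ q) (Ioi 0) := by
  have hsplit : Ioi (0:ℝ) = Ioc 0 1 ∪ Ioi 1 := (Ioc_union_Ioi_eq_Ioi zero_le_one).symm
  rw [hsplit]
  apply IntegrableOn.union
  · exact (aux_cont p q).integrableOn_Ioc
  · have hexp : (p : ℝ) - 2 * q < -1 := by
      have : (p : ℝ) + 2 ≤ 2 * q := by exact_mod_cast hpq
      linarith
    refine Integrable.mono' (g := fun r : ℝ => r ^ ((p : ℝ) - 2 * q))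
      (integrableOn_Ioi_rpow_of_lt hexp one_pos)
      ((aux_cont p q).aestronglyMeasurable.restrict) ?_
    filter_upwards [ae_restrict_mem measurableSet_Ioi] with r hr
    have hr0 : (0:ℝ) < r := lt_trans one_pos hr
    rw [Real.norm_eq_abs, abs_of_nonneg (div_nonneg (pow_nonneg hr0.le p) (by positivity))]
    exact aux_le p q (le_of_lt hr)

lemma aux_alg (a b : ℕ) (r A : ℝ) (hA : A ≠ 0) :
    ((a:ℝ)+1) * (r^a/(A^(b+1))) - 2*((b:ℝ)+1) * (r^(a+2)/(A^(b+2))) =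
    (((a:ℝ)+1) * r^a * A^(b+1) - r^(a+1)*(((b:ℝ)+1) * A^b * (2*r)))/((A^(b+1))^2) := by
  have hP : A ^ b ≠ 0 := pow_ne_zero _ hA
  simp only [pow_succ]
  field_simp

lemma aux_ibp (a b : ℕ) (hab : a ≤ 2 * b) :
    ((a : ℝ) + 1) * ∫ r in Ioi (0:ℝ), r ^ a / (1 + r ^ 2) ^ (b + 1) =
      (2 * ((b : ℝ) + 1)) * ∫ r in Ioi (0:ℝ), r ^ (a + 2) / (1 + r ^ 2) ^ (b + 2) := by
  set F : ℝ → ℝ := fun r => r ^ (a + 1) / (1 + r ^ 2) ^ (b + 1) with hF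
  set F' : ℝ → ℝ := fun r =>
    ((a : ℝ) + 1) * (r ^ a / (1 + r ^ 2) ^ (b + 1)) -
      (2 * ((b : ℝ) + 1)) * (r ^ (a + 2) / (1 + r ^ 2) ^ (b + 2)) with hF'
  have hderiv : ∀ r ∈ Ici (0:ℝ), HasDerivAt F (F' r) r := by
    intro r _
    have hd1 : HasDerivAt (fun r : ℝ => r ^ (a + 1)) (((a:ℝ) + 1) * r ^ a) r := by
      simpa using hasDerivAt_pow (a + 1) r
    have hd0 : HasDerivAt (fun r : ℝ => 1 + r ^ 2) (2 * r) r := by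
      simpa using (hasDerivAt_pow 2 r).const_add 1
    have hd2 : HasDerivAt (fun r : ℝ => (1 + r ^ 2) ^ (b + 1))
        (((b:ℝ) + 1) * (1 + r ^ 2) ^ b * (2 * r)) r := by
      simpa using hd0.fun_pow (b + 1)
    have h := hd1.div hd2 (by positivity)
    refine h.congr_deriv ?_
    have hne : (1 + r ^ 2 : ℝ) ≠ 0 := by positivity
    exact (aux_alg a b r (1 + r ^ 2) hne).symm
  have hint1 : IntegrableOn (fun r : ℝ => r ^ a / (1 + r ^ 2) ^ (b + 1)) (Ioi 0) :=
    aux_integrable a (b + 1) (by omega)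
  have hint2 : IntegrableOn (fun r : ℝ => r ^ (a + 2) / (1 + r ^ 2) ^ (b + 2)) (Ioi 0) :=
    aux_integrable (a + 2) (b + 2) (by omega)
  have hint : IntegrableOn F' (Ioi 0) := (hint1.const_mul _).sub (hint2.const_mul _)
  have htop : Tendsto F atTop (𝓝 0) := by
    apply squeeze_zero' (g := fun r : ℝ => r ^ (((a + 1 : ℕ) : ℝ) - 2 * ((b + 1 : ℕ) : ℝ)))
    · filter_upwards [eventually_ge_atTop (1:ℝ)] with r hr
      have hr0 : (0:ℝ) < r := lt_of_lt_of_le one_pos hr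
      exact div_nonneg (pow_nonneg hr0.le _) (by positivity)
    · filter_upwards [eventually_ge_atTop (1:ℝ)] with r hr
      simpa using aux_le (a + 1) (b + 1) hr
    · have hexp : ((a + 1 : ℕ) : ℝ) - 2 * ((b + 1 : ℕ) : ℝ) =
          -(2 * ((b : ℝ) + 1) - ((a : ℝ) + 1)) := by push_cast; ring
      rw [hexp]
      apply tendsto_rpow_neg_atTop
      have : (a : ℝ) ≤ 2 * b := by exact_mod_cast hab
      linarith
  have heq : ∫ r in Ioi (0:ℝ), F' r = 0 - F 0 :=
    integral_Ioi_of_hasDerivAt_of_tendsto' hderiv hint htop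
  have hF0 : F 0 = 0 := by simp [hF]
  rw [hF0, sub_zero] at heq
  rw [hF'] at heq
  rw [integral_sub (hint1.const_mul _) (hint2.const_mul _),
    integral_const_mul, integral_const_mul] at heq
  linarith

noncomputable def psid (α ν : ℝ) : ℝ → ℝ := fun t =>
  (-α/4) * t ^ (-α/4-1) * (1+t) ^ (-(ν/2)) + t ^ (-α/4) * (-(ν/2) * (1+t) ^ (-(ν/2)-1))

lemma psid_hasDeriv (α ν : ℝ) {t : ℝ} (ht : 0 < t) :
    HasDerivAt (fun t : ℝ => t ^ (-α/4) * (1+t) ^ (-(ν/2))) (psid α ν t) t := by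
  have h1 : HasDerivAt (fun t : ℝ => t ^ (-α/4)) ((-α/4) * t ^ (-α/4-1)) t :=
    Real.hasDerivAt_rpow_const (Or.inl ht.ne')
  have h0 : HasDerivAt (fun t : ℝ => 1 + t) 1 t := (hasDerivAt_id t).const_add 1
  have h2 : HasDerivAt (fun t : ℝ => (1+t) ^ (-(ν/2))) (-(ν/2) * (1+t) ^ (-(ν/2)-1)) t := by
    simpa using h0.rpow_const (p := -(ν/2)) (Or.inl (by positivity))
  exact h1.mul h2

lemma grad_step {n : ℕ} (α ν : ℝ) (u : EuclideanSpace ℝ (Fin n) → ℝ)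
    (hueq : u = fun x => (‖x‖^2 : ℝ) ^ (-α/4) * (1+‖x‖^2) ^ (-(ν/2)))
    (x : EuclideanSpace ℝ (Fin n)) (hx : x ≠ 0) :
    HasGradientAt u ((2 * psid α ν (‖x‖^2)) • x) x := by
  have ht : (0:ℝ) < ‖x‖^2 := by
    have : ‖x‖ ≠ 0 := norm_ne_zero_iff.mpr hx
    positivity
  have h1 : HasDerivAt (fun t : ℝ => t ^ (-α/4) * (1+t) ^ (-(ν/2))) (psid α ν (‖x‖^2)) (‖x‖^2) :=
    psid_hasDeriv α ν ht
  have h2 : HasFDerivAt (fun y : EuclideanSpace ℝ (Fin n) => (‖y‖^2 : ℝ))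
      (2 • (innerSL ℝ x)) x := (hasStrictFDerivAt_norm_sq x).hasFDerivAt
  have h3 := h1.comp_hasFDerivAt x h2
  rw [hueq]
  rw [hasGradientAt_iff_hasFDerivAt]
  refine h3.congr_fderiv ?_
  ext y
  simp [InnerProductSpace.toDual_apply_apply, real_inner_smul_left, two_smul]
  ring

lemma sq_rpow_half (A e : ℝ) (hA : 0 ≤ A) : (A ^ (-(e/2)))^2 = A ^ (-e) := by
  rw [← Real.rpow_natCast (A ^ (-(e/2))) 2, ← Real.rpow_mul hA]
  norm_num

lemma rpow_sq_quarter (r α : ℝ) (hr : 0 ≤ r) : ((r^2 : ℝ)) ^ (-α/4) = r ^ (-α/2) := by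
  rw [← Real.rpow_natCast r 2, ← Real.rpow_mul hr]
  congr 1
  push_cast
  ring

lemma aux_alg2 (m : ℕ) (α r A a bb c : ℝ) (hr : r ≠ 0) (hA : A ≠ 0)
    (hab : a^2 * bb = (r^2)⁻¹) (hc : c^2 = (A^(m+1))⁻¹) :
    r^(m+4) * (bb * ((2 * (-(a*c)*(α/(4*r^2) + (((m:ℝ)+1)/2)/A)))^2 * r^2)) =
      (α^2/4) * (r^m/(A^(m+1))) + ((α*((m:ℝ)+1)) * (r^(m+2)/(A^(m+2))) +
        ((m:ℝ)+1)^2 * (r^(m+4)/(A^(m+3)))) := by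
  have hd : A^(m+1) ≠ 0 := pow_ne_zero _ hA
  have key : r^(m+4) * (bb * ((2 * (-(a*c)*(α/(4*r^2) + (((m:ℝ)+1)/2)/A)))^2 * r^2)) =
      4 * (a^2*bb) * c^2 * (α/(4*r^2) + (((m:ℝ)+1)/2)/A)^2 * r^(m+4) * r^2 := by ring
  rw [key, hab, hc]
  simp only [pow_succ]
  field_simp
  ring

lemma aux_H (m : ℕ) {r : ℝ} (hr : 0 < r) :
    r^(m+4) * (r ^ (-4:ℝ) * ((1+r^2) ^ (-(((m:ℝ)+1)/2)))^2) = r^m/(1+r^2)^(m+1) := by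
  have hA : (0:ℝ) < 1 + r^2 := by positivity
  have h1 : (r:ℝ)^(m+4) * r^(-4:ℝ) = r^m := by
    rw [← Real.rpow_natCast r (m+4), ← Real.rpow_add hr, ← Real.rpow_natCast r m]
    congr 1
    push_cast
    ring
  have h2 : ((1+r^2:ℝ) ^ (-(((m:ℝ)+1)/2)))^2 = ((1+r^2:ℝ)^(m+1))⁻¹ := by
    rw [sq_rpow_half _ _ hA.le, Real.rpow_neg hA.le, ← Real.rpow_natCast (1+r^2) (m+1)]
    congr 2
    push_cast
    ring
  calc r^(m+4) * (r ^ (-4:ℝ) * ((1+r^2) ^ (-(((m:ℝ)+1)/2)))^2)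
      = (r^(m+4) * r^(-4:ℝ)) * ((1+r^2) ^ (-(((m:ℝ)+1)/2)))^2 := by ring
    _ = r^m * ((1+r^2:ℝ)^(m+1))⁻¹ := by rw [h1, h2]
    _ = r^m/(1+r^2)^(m+1) := by rw [div_eq_mul_inv]

lemma aux_psid_eq (m : ℕ) (α : ℝ) {r : ℝ} (hr : 0 < r) :
    psid α ((m:ℝ)+1) (r^2) =
      -(r ^ (-α/2) * (1+r^2) ^ (-(((m:ℝ)+1)/2))) * (α/(4*r^2) + (((m:ℝ)+1)/2)/(1+r^2)) := by
  have ht : (0:ℝ) < r^2 := by positivity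
  have hA : (0:ℝ) < 1 + r^2 := by positivity
  unfold psid
  rw [show (-α/4 - 1 : ℝ) = -α/4 + (-1) from by ring,
    Real.rpow_add ht, show (-(((m:ℝ)+1)/2) - 1 : ℝ) = -(((m:ℝ)+1)/2) + (-1) from by ring,
    Real.rpow_add hA, Real.rpow_neg_one, Real.rpow_neg_one,
    rpow_sq_quarter r α hr.le]
  field_simp
  ring

lemma aux_G (m : ℕ) (α : ℝ) {r : ℝ} (hr : 0 < r) :
    r^(m+4) * (r ^ (α-2) * ((2 * psid α ((m:ℝ)+1) (r^2))^2 * r^2)) =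
      (α^2/4) * (r^m/(1+r^2)^(m+1)) + ((α*((m:ℝ)+1)) * (r^(m+2)/(1+r^2)^(m+2)) +
        ((m:ℝ)+1)^2 * (r^(m+4)/(1+r^2)^(m+3))) := by
  have hA : (0:ℝ) < 1 + r^2 := by positivity
  rw [aux_psid_eq m α hr]
  refine aux_alg2 m α r (1+r^2) (r ^ (-α/2)) (r ^ (α-2)) ((1+r^2) ^ (-(((m:ℝ)+1)/2)))
    hr.ne' hA.ne' ?_ ?_
  · rw [show ((r:ℝ) ^ (-α/2))^2 = r ^ (-α) from by
        rw [← Real.rpow_natCast (r ^ (-α/2)) 2, ← Real.rpow_mul hr.le]; norm_num,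
      ← Real.rpow_add hr]
    rw [show (-α + (α - 2) : ℝ) = -2 from by ring]
    rw [show ((r:ℝ)^2)⁻¹ = r ^ (-2:ℝ) from by
        rw [Real.rpow_neg hr.le, ← Real.rpow_natCast r 2]; norm_num]
  · rw [sq_rpow_half _ _ hA.le, Real.rpow_neg hA.le, ← Real.rpow_natCast (1+r^2) (m+1)]
    congr 2
    push_cast
    ring

theorem talenti_weighted_grad_identity (n : ℕ) (hn : 5 ≤ n) (α : ℝ)
    (hα₁ : (4 : ℝ) - n < α) (hα₂ : α < n)
    (U : EuclideanSpace ℝ (Fin n) → ℝ)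
    (hU : ∀ x, U x = (1 + ‖x‖ ^ 2) ^ (-((n : ℝ) - 4) / 2))
    (u : EuclideanSpace ℝ (Fin n) → ℝ)
    (hu : ∀ x, u x = ‖x‖ ^ (-α / 2) * U x) :
    ∫ x : EuclideanSpace ℝ (Fin n), ‖x‖ ^ (α - 2) * ‖gradient u x‖ ^ 2 =
      ((((n : ℝ) - 4 + α) / 2) ^ 2 + ((n : ℝ) - 4) ^ 2 / (4 * ((n : ℝ) - 3))) *
        ∫ x : EuclideanSpace ℝ (Fin n), ‖x‖ ^ (-4 : ℝ) * (U x) ^ 2 := by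
  obtain ⟨m, rfl⟩ : ∃ m, n = m + 5 := ⟨n - 5, by omega⟩
  haveI : Nonempty (Fin (m+5)) := ⟨⟨0, by omega⟩⟩
  haveI : Nontrivial (EuclideanSpace ℝ (Fin (m+5))) := inferInstance
  -- the function u as a radial function of ‖x‖²
  have hueq : u = fun x : EuclideanSpace ℝ (Fin (m+5)) => (‖x‖^2 : ℝ) ^ (-α/4) * (1+‖x‖^2) ^ (-((((m:ℝ)+1))/2)) := by
    funext x
    rw [hu, hU, rpow_sq_quarter ‖x‖ α (norm_nonneg x)]
    congr 2
    push_cast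
    ring
  -- pointwise description of the gradient
  have hgrad : ∀ x : EuclideanSpace ℝ (Fin (m+5)), x ≠ 0 → HasGradientAt u ((2 * psid α ((m:ℝ)+1) (‖x‖^2)) • x) x :=
    fun x hx => grad_step α ((m:ℝ)+1) u hueq x hx
  set G : ℝ → ℝ := fun r => r ^ (α-2) * ((2 * psid α ((m:ℝ)+1) (r^2))^2 * r^2) with hG
  set H : ℝ → ℝ := fun r => r ^ (-4:ℝ) * ((1+r^2) ^ (-(((m:ℝ)+1)/2)))^2 with hH
  -- replace LHS integrand a.e.
  have h0 : ∀ᵐ x : EuclideanSpace ℝ (Fin (m+5)), x ≠ 0 := by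
    have hz : volume ({0} : Set (EuclideanSpace ℝ (Fin (m+5)))) = 0 := measure_singleton 0
    rw [ae_iff]
    simpa [Set.setOf_eq_eq_singleton] using hz
  have hae : (fun x : EuclideanSpace ℝ (Fin (m+5)) => ‖x‖ ^ (α-2) * ‖gradient u x‖ ^ 2) =ᵐ[volume]
      (fun x : EuclideanSpace ℝ (Fin (m+5)) => G ‖x‖) := by
    filter_upwards [h0] with x hx
    rw [(hgrad x hx).gradient, norm_smul, mul_pow, Real.norm_eq_abs, sq_abs, hG]
  have hUeq : (fun x : EuclideanSpace ℝ (Fin (m+5)) => ‖x‖ ^ (-4:ℝ) * (U x) ^ 2) = fun x : EuclideanSpace ℝ (Fin (m+5)) => H ‖x‖ := by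
    funext x
    rw [hU, hH]
    congr 3
    push_cast
    ring
  rw [integral_congr_ae hae, hUeq]
  -- polar coordinates
  have hpolarG := MeasureTheory.integral_fun_norm_addHaar (volume : Measure (EuclideanSpace ℝ (Fin (m+5)))) G
  have hpolarH := MeasureTheory.integral_fun_norm_addHaar (volume : Measure (EuclideanSpace ℝ (Fin (m+5)))) H
  rw [hpolarG, hpolarH]
  simp only [finrank_euclideanSpace_fin, smul_eq_mul, nsmul_eq_mul]
  have hdim : m + 5 - 1 = m + 4 := by omega
  rw [hdim]
  -- the key 1-D identity
  set J1 := ∫ r in Ioi (0:ℝ), r ^ m / (1 + r ^ 2) ^ (m+1) with hJ1def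
  set J2 := ∫ r in Ioi (0:ℝ), r ^ (m+2) / (1 + r ^ 2) ^ (m+2) with hJ2def
  set J3 := ∫ r in Ioi (0:ℝ), r ^ (m+4) / (1 + r ^ 2) ^ (m+3) with hJ3def
  have hint1 : IntegrableOn (fun r : ℝ => r ^ m / (1 + r ^ 2) ^ (m+1)) (Ioi 0) :=
    aux_integrable m (m+1) (by omega)
  have hint2 : IntegrableOn (fun r : ℝ => r ^ (m+2) / (1 + r ^ 2) ^ (m+2)) (Ioi 0) :=
    aux_integrable (m+2) (m+2) (by omega)
  have hint3 : IntegrableOn (fun r : ℝ => r ^ (m+4) / (1 + r ^ 2) ^ (m+3)) (Ioi 0) :=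
    aux_integrable (m+4) (m+3) (by omega)
  have hGint : ∫ r in Ioi (0:ℝ), r ^ (m+4) * G r =
      (α^2/4) * J1 + ((α*((m:ℝ)+1)) * J2 + ((m:ℝ)+1)^2 * J3) := by
    rw [show (∫ r in Ioi (0:ℝ), r ^ (m+4) * G r) =
        ∫ r in Ioi (0:ℝ), ((α^2/4) * (r^m/(1+r^2)^(m+1)) +
          ((α*((m:ℝ)+1)) * (r^(m+2)/(1+r^2)^(m+2)) +
            ((m:ℝ)+1)^2 * (r^(m+4)/(1+r^2)^(m+3)))) from
      setIntegral_congr_fun measurableSet_Ioi (fun r hr => aux_G m α hr)]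
    have hint23 : IntegrableOn (fun r : ℝ => (α*((m:ℝ)+1)) * (r^(m+2)/(1+r^2)^(m+2)) +
        ((m:ℝ)+1)^2 * (r^(m+4)/(1+r^2)^(m+3))) (Ioi 0) :=
      (hint2.const_mul _).add (hint3.const_mul _)
    rw [integral_add (hint1.const_mul _) hint23,
      integral_add (hint2.const_mul _) (hint3.const_mul _),
      integral_const_mul, integral_const_mul, integral_const_mul]
  have hHint : ∫ r in Ioi (0:ℝ), r ^ (m+4) * H r = J1 := by
    rw [show (∫ r in Ioi (0:ℝ), r ^ (m+4) * H r) =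
        ∫ r in Ioi (0:ℝ), r^m/(1+r^2)^(m+1) from
      setIntegral_congr_fun measurableSet_Ioi (fun r hr => aux_H m hr)]
  have hibp1 := aux_ibp m m (by omega)
  have hibp2 := aux_ibp (m+2) (m+1) (by omega)
  have hJ12 : J1 = 2 * J2 := by
    apply mul_left_cancel₀ (show ((m:ℝ)+1) ≠ 0 by positivity)
    rw [← hJ1def] at hibp1
    calc ((m:ℝ)+1) * J1 = 2*((m:ℝ)+1) * J2 := by rw [hibp1, hJ2def]
      _ = ((m:ℝ)+1) * (2 * J2) := by ring
  have hJ32 : 2*((m:ℝ)+2) * J3 = ((m:ℝ)+3) * J2 := by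
    have := hibp2
    push_cast at this
    rw [show ((m:ℝ)+2+1) = (m:ℝ)+3 from by ring, show ((m:ℝ)+1+1) = (m:ℝ)+2 from by ring] at this
    linarith [this]
  rw [hGint, hHint, hJ12]
  have hm2 : ((m:ℝ)+2) ≠ 0 := by positivity
  have hJ3v : J3 = ((m:ℝ)+3) / (2*((m:ℝ)+2)) * J2 := by
    field_simp
    linarith [hJ32]
  rw [hJ3v]
  push_cast
  rw [show ((m:ℝ) + 5 - 4 : ℝ) = (m:ℝ)+1 from by ring,
    show ((m:ℝ) + 5 - 3 : ℝ) = (m:ℝ)+2 from by ring]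
  field_simp
  ring
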